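/- If two annotation-free extended Plebeia nodes n₁ and n₂ both satisfy the shape invariants (SI1), (SI2), and (SI6) at every subtree and modelize_node_aux(n₁) = modelize_node_aux(n₂), then n₁ = n₂; i.e., the shape invariants force a canonical tree representation of each nested key–value store. -/

import Mathlib

/-- A side is `L` or `R`. -/
inductive Side : Type
  | L | R
deriving DecidableEq, Repr

/-- A key is a list of sides. -/
abbrev Key := List Side

/-- The strict order `L < R` on sides. -/
def Side.lt : Side → Side → Prop := fun a b => a = Side.L ∧ b = Side.R

/-- The strict lexicographic order on keys induced by `L < R`. -/
def keyLt : Key → Key → Prop := List.Lex Side.lt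

/-- A list of keys is prefix-free: for any two distinct keys in it,
neither is a prefix of the other. -/
def PrefixFreeList (ks : List Key) : Prop :=
  List.Pairwise (fun a b => ¬ a <+: b ∧ ¬ b <+: a) ks

/-- A set of keys is prefix-free. -/
def PrefixFreeSet (S : Set Key) : Prop :=
  ∀ a ∈ S, ∀ b ∈ S, a ≠ b → ¬ a <+: b

/-- A list of keys is strictly increasing in the lexicographic order. -/
def SortedKeys (ks : List Key) : Prop := List.Pairwise keyLt ks

/-- Key list of an association list is prefix-free and strictly increasing. -/
def GoodKeyList (ks : List Key) : Prop := PrefixFreeList ks ∧ SortedKeys ks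

/-- Prepend the key `s` to the key of every entry. -/
def prependAll {β : Type _} (s : Key) (l : List (Key × β)) : List (Key × β) :=
  l.map (fun e => (s ++ e.1, e.2))

/-- `lookup l k` is `some` of the value of the first entry of `l` with key `k`. -/
def lookupA {β : Type _} (l : List (Key × β)) (k : Key) : Option β :=
  (l.find? (fun e => decide (e.1 = k))).map Prod.snd
/-- Annotation-free extended Plebeia nodes over a value type `α`. -/
inductive ANode (α : Type) : Type
  | leaf : α → ANode α
  | branch : ANode α → ANode α → ANode α
  | extender : Key → ANode α → ANode α
  | bud : Option (ANode α) → ANode α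

variable {α : Type}

def ANode.isExtender : ANode α → Prop
  | .extender _ _ => True
  | _ => False

def ANode.isBud : ANode α → Prop
  | .bud _ => True
  | _ => False

def ANode.isLeaf : ANode α → Prop
  | .leaf _ => True
  | _ => False

/-- Shape invariants (SI1), (SI2), (SI6) at every subtree. -/
def ANode.shapeInv : ANode α → Prop
  | .leaf _ => True
  | .branch l r => l.shapeInv ∧ r.shapeInv
  | .extender s n => (¬ n.isExtender) ∧ s ≠ [] ∧ n.shapeInv
  | .bud none => True
  | .bud (some n) => (¬ n.isBud) ∧ (¬ n.isLeaf) ∧ n.shapeInv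

/-- Nested values: either a value or a nested key--value store (association list). -/
inductive NestedValue (α : Type) : Type
  | value : α → NestedValue α
  | map : List (Key × NestedValue α) → NestedValue α

/-- `modelize_node_aux` for annotation-free nodes. -/
def modelizeNodeAux : ANode α → List (Key × NestedValue α)
  | .leaf v => [([], .value v)]
  | .branch l r =>
      prependAll [Side.L] (modelizeNodeAux l) ++ prependAll [Side.R] (modelizeNodeAux r)
  | .extender s n => prependAll s (modelizeNodeAux n)
  | .bud none => [([], .map [])]
  | .bud (some n) => [([], .map (modelizeNodeAux n))]

namespace Stmt14Aux

lemma model_ne_nil : ∀ n : ANode α, modelizeNodeAux n ≠ []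
  | .leaf _ => by simp [modelizeNodeAux]
  | .branch l r => by
      have hl := model_ne_nil l
      simp [modelizeNodeAux, prependAll, hl]
  | .extender s n => by
      have hn := model_ne_nil n
      simp [modelizeNodeAux, prependAll, hn]
  | .bud none => by simp [modelizeNodeAux]
  | .bud (some _) => by simp [modelizeNodeAux]

lemma prependAll_inj {β : Type _} (s : Key) {l₁ l₂ : List (Key × β)}
    (h : prependAll s l₁ = prependAll s l₂) : l₁ = l₂ := by
  have hinj : Function.Injective (fun e : Key × β => (s ++ e.1, e.2)) := by
    rintro ⟨a, b⟩ ⟨c, d⟩ he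
    simp only [Prod.mk.injEq] at he
    exact Prod.ext (List.append_cancel_left he.1) he.2
  exact List.map_injective_iff.mpr hinj h

lemma mem_prependAll {β : Type _} {s : Key} {m : List (Key × β)} {e : Key × β}
    (h : e ∈ m) : (s ++ e.1, e.2) ∈ prependAll s m :=
  List.mem_map.mpr ⟨e, h, rfl⟩

lemma prefix_of_mem_prependAll {β : Type _} {s : Key} {m : List (Key × β)} {e : Key × β}
    (h : e ∈ prependAll s m) : s <+: e.1 := by
  obtain ⟨e', _, he⟩ := List.mem_map.mp h
  exact ⟨e'.1, by rw [← he]⟩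

lemma branch_has_L (l r : ANode α) :
    ∃ e ∈ modelizeNodeAux (ANode.branch l r), ∃ u, e.1 = Side.L :: u := by
  obtain ⟨e, he⟩ := List.exists_mem_of_ne_nil _ (model_ne_nil l)
  refine ⟨([Side.L] ++ e.1, e.2), ?_, e.1, rfl⟩
  exact List.mem_append_left _ (mem_prependAll he)

lemma branch_has_R (l r : ANode α) :
    ∃ e ∈ modelizeNodeAux (ANode.branch l r), ∃ u, e.1 = Side.R :: u := by
  obtain ⟨e, he⟩ := List.exists_mem_of_ne_nil _ (model_ne_nil r)
  refine ⟨([Side.R] ++ e.1, e.2), ?_, e.1, rfl⟩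
  exact List.mem_append_right _ (mem_prependAll he)

/-- The model of a branch is never a singleton list. -/
lemma model_branch_ne_singleton (l r : ANode α) (e : Key × NestedValue α) :
    modelizeNodeAux (ANode.branch l r) ≠ [e] := by
  intro h
  obtain ⟨e1, he1, u, hu⟩ := branch_has_L l r
  obtain ⟨e2, he2, v, hv⟩ := branch_has_R l r
  rw [h, List.mem_singleton] at he1 he2
  subst he1; subst he2
  rw [hu] at hv
  simp at hv

lemma model_extender_ne_nilkey {s : Key} (hs : s ≠ []) (n : ANode α)
    (x : NestedValue α) : modelizeNodeAux (ANode.extender s n) ≠ [([], x)] := by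
  intro h
  obtain ⟨e, he⟩ := List.exists_mem_of_ne_nil _ (model_ne_nil n)
  have hmem : ((s ++ e.1, e.2) : Key × NestedValue α)
      ∈ modelizeNodeAux (ANode.extender s n) := mem_prependAll he
  rw [h, List.mem_singleton] at hmem
  have : s ++ e.1 = ([] : Key) := congrArg Prod.fst hmem
  rw [List.append_eq_nil_iff] at this
  exact hs this.1

lemma model_branch_ne_extender (l r : ANode α) {s : Key} (hs : s ≠ []) (n : ANode α) :
    modelizeNodeAux (ANode.branch l r) ≠ modelizeNodeAux (ANode.extender s n) := by
  intro h
  obtain ⟨e1, he1, u, hu⟩ := branch_has_L l r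
  obtain ⟨e2, he2, v, hv⟩ := branch_has_R l r
  rw [h] at he1 he2
  have p1 : s <+: e1.1 := prefix_of_mem_prependAll he1
  have p2 : s <+: e2.1 := prefix_of_mem_prependAll he2
  cases s with
  | nil => exact hs rfl
  | cons c s' =>
    rw [hu] at p1; rw [hv] at p2
    have h1 := (List.cons_prefix_cons.mp p1).1
    have h2 := (List.cons_prefix_cons.mp p2).1
    rw [h1] at h2
    exact Side.noConfusion h2

/-- Splitting a concatenation along a predicate. -/
lemma split_pred {β : Type _} (P : β → Prop) (a : List β) :
    ∀ (c b d : List β), a ++ b = c ++ d →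
      (∀ x ∈ a, P x) → (∀ x ∈ c, P x) → (∀ x ∈ b, ¬ P x) → (∀ x ∈ d, ¬ P x) →
      a = c ∧ b = d := by
  induction a with
  | nil =>
    intro c b d h _ hc hb _
    cases c with
    | nil => exact ⟨rfl, h⟩
    | cons y c =>
      exfalso
      rw [List.nil_append] at h
      have : y ∈ b := by rw [h]; exact List.mem_cons_self
      exact hb y this (hc y (List.mem_cons_self))
  | cons x a ih =>
    intro c b d h ha hc hb hd
    cases c with
    | nil =>
      exfalso
      rw [List.nil_append] at h
      have : x ∈ d := by rw [← h]; exact List.mem_cons_self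
      exact hd x this (ha x (List.mem_cons_self))
    | cons y c =>
      simp only [List.cons_append, List.cons.injEq] at h
      obtain ⟨h1, h2⟩ := h
      obtain ⟨e1, e2⟩ := ih c b d h2 (fun z hz => ha z (List.mem_cons_of_mem _ hz))
        (fun z hz => hc z (List.mem_cons_of_mem _ hz)) hb hd
      exact ⟨by rw [h1, e1], e2⟩

/-- A non-extender node has either a singleton model with empty key, or elements
with keys starting with both `L` and `R`. -/
lemma model_shape : ∀ n : ANode α, ¬ n.isExtender →
    (∃ x, modelizeNodeAux n = [([], x)]) ∨
    ((∃ e ∈ modelizeNodeAux n, ∃ u, e.1 = Side.L :: u) ∧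
     (∃ e ∈ modelizeNodeAux n, ∃ u, e.1 = Side.R :: u))
  | .leaf v, _ => Or.inl ⟨.value v, rfl⟩
  | .branch l r, _ => Or.inr ⟨branch_has_L l r, branch_has_R l r⟩
  | .extender _ _, h => absurd trivial h
  | .bud none, _ => Or.inl ⟨.map [], rfl⟩
  | .bud (some n), _ => Or.inl ⟨.map (modelizeNodeAux n), rfl⟩

lemma prefix_of_two {s₁ s₂ : Key} {u v : Key}
    (h1 : s₂ <+: s₁ ++ Side.L :: u) (h2 : s₂ <+: s₁ ++ Side.R :: v) : s₂ <+: s₁ := by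
  rcases List.prefix_or_prefix_of_prefix
      (⟨Side.L :: u, rfl⟩ : s₁ <+: s₁ ++ Side.L :: u) h1 with h | h
  · obtain ⟨t, rfl⟩ := h
    rw [List.prefix_append_right_inj] at h1 h2
    cases t with
    | nil => simp
    | cons c t =>
      have hL := (List.cons_prefix_cons.mp h1).1
      have hR := (List.cons_prefix_cons.mp h2).1
      rw [hL] at hR
      exact Side.noConfusion hR
  · exact h

/-- In an extender-extender situation, the keys agree. -/
lemma extender_keys_eq {s s' : Key} {n n' : ANode α}
    (hs : s ≠ []) (hs' : s' ≠ []) (hne : ¬ n.isExtender) (hne' : ¬ n'.isExtender)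
    (hm : prependAll s (modelizeNodeAux n) = prependAll s' (modelizeNodeAux n')) :
    s = s' := by
  rcases model_shape n hne with ⟨x, hx⟩ | ⟨⟨e1, he1, u, hu⟩, ⟨e2, he2, v, hv⟩⟩
  · rcases model_shape n' hne' with ⟨y, hy⟩ | ⟨⟨f1, hf1, u', hu'⟩, ⟨f2, hf2, v', hv'⟩⟩
    · rw [hx, hy] at hm
      simp only [prependAll, List.map_cons, List.map_nil, List.append_nil,
        List.cons.injEq, Prod.mk.injEq] at hm
      exact hm.1.1
    · -- LHS is a singleton, RHS has keys with distinct heads after s'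
      exfalso
      have m1 : ((s' ++ f1.1, f1.2) : Key × NestedValue α) ∈
          prependAll s (modelizeNodeAux n) := by rw [hm]; exact mem_prependAll hf1
      have m2 : ((s' ++ f2.1, f2.2) : Key × NestedValue α) ∈
          prependAll s (modelizeNodeAux n) := by rw [hm]; exact mem_prependAll hf2
      rw [hx] at m1 m2
      simp only [prependAll, List.map_cons, List.map_nil, List.append_nil,
        List.mem_singleton, Prod.mk.injEq] at m1 m2
      have : s' ++ f1.1 = s' ++ f2.1 := by rw [m1.1, ← m2.1]
      have := List.append_cancel_left this
      rw [hu', hv'] at this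
      simp at this
  · rcases model_shape n' hne' with ⟨y, hy⟩ | ⟨⟨f1, hf1, u', hu'⟩, ⟨f2, hf2, v', hv'⟩⟩
    · exfalso
      rw [hy] at hm
      have m1 : ((s ++ e1.1, e1.2) : Key × NestedValue α) ∈
          prependAll s' [(([] : Key), y)] := by rw [← hm]; exact mem_prependAll he1
      have m2 : ((s ++ e2.1, e2.2) : Key × NestedValue α) ∈
          prependAll s' [(([] : Key), y)] := by rw [← hm]; exact mem_prependAll he2
      simp only [prependAll, List.map_cons, List.map_nil, List.append_nil,
        List.mem_singleton, Prod.mk.injEq] at m1 m2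
      have : s ++ e1.1 = s ++ e2.1 := by rw [m1.1, ← m2.1]
      have := List.append_cancel_left this
      rw [hu, hv] at this
      simp at this
    · -- both branch-like: mutual prefix argument
      have p1 : s' <+: s ++ e1.1 := by
        have : ((s ++ e1.1, e1.2) : Key × NestedValue α) ∈
            prependAll s' (modelizeNodeAux n') := by rw [← hm]; exact mem_prependAll he1
        exact prefix_of_mem_prependAll this
      have p2 : s' <+: s ++ e2.1 := by
        have : ((s ++ e2.1, e2.2) : Key × NestedValue α) ∈
            prependAll s' (modelizeNodeAux n') := by rw [← hm]; exact mem_prependAll he2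
        exact prefix_of_mem_prependAll this
      have q1 : s <+: s' ++ f1.1 := by
        have : ((s' ++ f1.1, f1.2) : Key × NestedValue α) ∈
            prependAll s (modelizeNodeAux n) := by rw [hm]; exact mem_prependAll hf1
        exact prefix_of_mem_prependAll this
      have q2 : s <+: s' ++ f2.1 := by
        have : ((s' ++ f2.1, f2.2) : Key × NestedValue α) ∈
            prependAll s (modelizeNodeAux n) := by rw [hm]; exact mem_prependAll hf2
        exact prefix_of_mem_prependAll this
      rw [hu] at p1; rw [hv] at p2; rw [hu'] at q1; rw [hv'] at q2
      have hps : s' <+: s := prefix_of_two p1 p2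
      have hps' : s <+: s' := prefix_of_two q1 q2
      exact hps'.eq_of_length (Nat.le_antisymm hps'.length_le hps.length_le)

lemma headL_of_mem_pL {m : List (Key × NestedValue α)} {e : Key × NestedValue α}
    (h : e ∈ prependAll [Side.L] m) : ∃ u, e.1 = Side.L :: u := by
  obtain ⟨t, ht⟩ := prefix_of_mem_prependAll h
  exact ⟨t, ht.symm⟩

lemma headR_of_mem_pR {m : List (Key × NestedValue α)} {e : Key × NestedValue α}
    (h : e ∈ prependAll [Side.R] m) : ∃ u, e.1 = Side.R :: u := by
  obtain ⟨t, ht⟩ := prefix_of_mem_prependAll h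
  exact ⟨t, ht.symm⟩

end Stmt14Aux

open Stmt14Aux

/-- if two annotation-free extended Plebeia nodes both satisfy the
shape invariants (SI1), (SI2), (SI6) at every subtree and have the same
`modelize_node_aux`, then they are equal. -/
theorem stmt14 {α : Type} (n₁ n₂ : ANode α)
    (h₁ : n₁.shapeInv) (h₂ : n₂.shapeInv)
    (hm : modelizeNodeAux n₁ = modelizeNodeAux n₂) : n₁ = n₂ := by
  suffices H : ∀ N, ∀ n₁ n₂ : ANode α, sizeOf n₁ < N → n₁.shapeInv → n₂.shapeInv →
      modelizeNodeAux n₁ = modelizeNodeAux n₂ → n₁ = n₂ by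
    exact H (sizeOf n₁ + 1) n₁ n₂ (Nat.lt_succ_self _) h₁ h₂ hm
  clear h₁ h₂ hm n₁ n₂
  intro N
  induction N with
  | zero => intro n₁ _ h; omega
  | succ N ih =>
    intro n₁ n₂ hsz h₁ h₂ hm
    cases n₁ with
    | leaf v =>
      cases n₂ with
      | leaf w =>
        simp only [modelizeNodeAux, List.cons.injEq, Prod.mk.injEq,
          NestedValue.value.injEq, and_true, true_and] at hm
        rw [hm]
      | branch l r => exact absurd hm.symm (model_branch_ne_singleton l r _)
      | extender s n =>
        obtain ⟨hne, hs, hsh⟩ := h₂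
        exact absurd hm.symm (model_extender_ne_nilkey hs n _)
      | bud o =>
        cases o with
        | none => simp [modelizeNodeAux] at hm
        | some n => simp [modelizeNodeAux] at hm
    | branch l r =>
      cases n₂ with
      | leaf w => exact absurd hm (model_branch_ne_singleton l r _)
      | bud o =>
        cases o with
        | none => exact absurd hm (model_branch_ne_singleton l r _)
        | some n => exact absurd hm (model_branch_ne_singleton l r _)
      | extender s n =>
        obtain ⟨hne, hs, hsh⟩ := h₂
        exact absurd hm (model_branch_ne_extender l r hs n)
      | branch l' r' =>
        obtain ⟨hl, hr⟩ := h₁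
        obtain ⟨hl', hr'⟩ := h₂
        simp only [modelizeNodeAux] at hm
        obtain ⟨e1, e2⟩ := split_pred (fun e : Key × NestedValue α => ∃ u, e.1 = Side.L :: u)
          _ _ _ _ hm
          (fun x hx => headL_of_mem_pL hx) (fun x hx => headL_of_mem_pL hx)
          (fun x hx => by
            obtain ⟨u, hu⟩ := headR_of_mem_pR hx
            rintro ⟨w, hw⟩; rw [hu] at hw; simp at hw)
          (fun x hx => by
            obtain ⟨u, hu⟩ := headR_of_mem_pR hx
            rintro ⟨w, hw⟩; rw [hu] at hw; simp at hw)
        have hL := prependAll_inj _ e1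
        have hR := prependAll_inj _ e2
        have szl : sizeOf l < N := by
          simp only [ANode.branch.sizeOf_spec] at hsz; omega
        have szr : sizeOf r < N := by
          simp only [ANode.branch.sizeOf_spec] at hsz; omega
        rw [ih l l' szl hl hl' hL, ih r r' szr hr hr' hR]
    | extender s n =>
      obtain ⟨hne, hs, hsh⟩ := h₁
      cases n₂ with
      | leaf w => exact absurd hm (model_extender_ne_nilkey hs n _)
      | bud o =>
        cases o with
        | none => exact absurd hm (model_extender_ne_nilkey hs n _)
        | some m => exact absurd hm (model_extender_ne_nilkey hs n _)
      | branch l r => exact absurd hm.symm (model_branch_ne_extender l r hs n)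
      | extender s' n' =>
        obtain ⟨hne', hs', hsh'⟩ := h₂
        have hss : s = s' := extender_keys_eq hs hs' hne hne' hm
        subst hss
        have hmod : modelizeNodeAux n = modelizeNodeAux n' := prependAll_inj s hm
        have szn : sizeOf n < N := by
          simp only [ANode.extender.sizeOf_spec] at hsz; omega
        rw [ih n n' szn hsh hsh' hmod]
    | bud o =>
      cases o with
      | none =>
        cases n₂ with
        | leaf w => simp [modelizeNodeAux] at hm
        | branch l r => exact absurd hm.symm (model_branch_ne_singleton l r _)
        | extender s' n' =>
          obtain ⟨_, hs', _⟩ := h₂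
          exact absurd hm.symm (model_extender_ne_nilkey hs' n' _)
        | bud o' =>
          cases o' with
          | none => rfl
          | some m =>
            simp only [modelizeNodeAux, List.cons.injEq, Prod.mk.injEq,
              NestedValue.map.injEq, true_and, and_true] at hm
            exact absurd hm.symm (model_ne_nil m)
      | some m =>
        cases n₂ with
        | leaf w => simp [modelizeNodeAux] at hm
        | branch l r => exact absurd hm.symm (model_branch_ne_singleton l r _)
        | extender s' n' =>
          obtain ⟨_, hs', _⟩ := h₂
          exact absurd hm.symm (model_extender_ne_nilkey hs' n' _)
        | bud o' =>
          cases o' with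
          | none =>
            simp only [modelizeNodeAux, List.cons.injEq, Prod.mk.injEq,
              NestedValue.map.injEq, true_and, and_true] at hm
            exact absurd hm (model_ne_nil m)
          | some m' =>
            simp only [modelizeNodeAux, List.cons.injEq, Prod.mk.injEq,
              NestedValue.map.injEq, true_and, and_true] at hm
            obtain ⟨_, _, hshm⟩ := h₁
            obtain ⟨_, _, hshm'⟩ := h₂
            have szm : sizeOf m < N := by
              simp only [ANode.bud.sizeOf_spec, Option.some.sizeOf_spec] at hsz; omega
            rw [ih m m' szm hshm hshm' hm]
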